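/- Let A be a positive definite symmetric (n+1)×(n+1) real matrix with Cholesky factorization A = L Lᵀ. If x_1, ..., x_N lie on the ellipsoid {z : ⟨z, A z⟩ = 1} and satisfy the dynamics ẋ_i = (I − x_i x_iᵀ A) Σ_{j ∈ N_i} a_{ij} x_j, then the transformed variables y_i = Lᵀ x_i lie on the unit sphere and satisfy ẏ_i = (I − y_i y_iᵀ) Σ_{j ∈ N_i} a_{ij} y_j. -/

import Mathlib

open Matrix

private lemma keydot {m : ℕ} (L : Matrix (Fin m) (Fin m) ℝ) (x s : Fin m → ℝ) :
    (Lᵀ *ᵥ x) ⬝ᵥ (Lᵀ *ᵥ s) = x ⬝ᵥ ((L * Lᵀ) *ᵥ s) := by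
  rw [← Matrix.mulVec_mulVec, Matrix.dotProduct_mulVec x L, ← Matrix.vecMul_transpose, Matrix.transpose_transpose]

theorem stmt5 (n N : ℕ) (A L : Matrix (Fin (n + 1)) (Fin (n + 1)) ℝ)
    (hA : A.PosDef) (hAL : A = L * Lᵀ)
    (G : SimpleGraph (Fin N)) [DecidableRel G.Adj]
    (a : Fin N → Fin N → ℝ) (ha : ∀ i j, 0 ≤ a i j)
    (x : Fin N → ℝ → Fin (n + 1) → ℝ)
    (hell : ∀ i t, ∑ k, x i t k * A.mulVec (x i t) k = 1)
    (hdyn : ∀ i t, HasDerivAt (x i)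
      ((∑ j, if G.Adj i j then a i j • x j t else 0) -
        (∑ k, x i t k * A.mulVec (∑ j, if G.Adj i j then a i j • x j t else 0) k)
          • x i t) t) :
    ∀ i t,
      Real.sqrt (∑ k, (Lᵀ.mulVec (x i t)) k ^ 2) = 1 ∧
      HasDerivAt (fun s => Lᵀ.mulVec (x i s))
        ((∑ j, if G.Adj i j then a i j • Lᵀ.mulVec (x j t) else 0) -
          (∑ k, (Lᵀ.mulVec (x i t)) k *
            (∑ j, if G.Adj i j then a i j • Lᵀ.mulVec (x j t) else 0) k)
            • Lᵀ.mulVec (x i t)) t := by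
  intro i t
  have hkey : ∀ u v : Fin (n + 1) → ℝ,
      (Lᵀ *ᵥ u) ⬝ᵥ (Lᵀ *ᵥ v) = u ⬝ᵥ (A *ᵥ v) := by
    intro u v; rw [hAL]; exact keydot L u v
  constructor
  · have h1 : ∑ k, (Lᵀ.mulVec (x i t)) k ^ 2 = (Lᵀ *ᵥ x i t) ⬝ᵥ (Lᵀ *ᵥ x i t) := by
      simp [dotProduct, sq]
    rw [h1, hkey]
    have := hell i t
    rw [show (x i t) ⬝ᵥ (A *ᵥ x i t) = ∑ k, x i t k * A.mulVec (x i t) k from rfl, this]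
    exact Real.sqrt_one
  · set T : (Fin (n+1) → ℝ) →L[ℝ] (Fin (n+1) → ℝ) :=
      LinearMap.toContinuousLinearMap (Matrix.mulVecLin Lᵀ) with hT
    have hTapp : ∀ v, T v = Lᵀ *ᵥ v := fun v => rfl
    have hd := (T.hasFDerivAt.comp_hasDerivAt t (hdyn i t))
    have hS : T (∑ j, if G.Adj i j then a i j • x j t else 0) =
        ∑ j, if G.Adj i j then a i j • Lᵀ.mulVec (x j t) else 0 := by
      rw [map_sum]
      refine Finset.sum_congr rfl fun j _ => ?_
      split_ifs
      · rw [_root_.map_smul]; rfl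
      · exact map_zero T
    have hcoef : (∑ k, (Lᵀ.mulVec (x i t)) k *
          (∑ j, if G.Adj i j then a i j • Lᵀ.mulVec (x j t) else 0) k)
        = ∑ k, x i t k * A.mulVec (∑ j, if G.Adj i j then a i j • x j t else 0) k := by
      rw [← hS]
      exact hkey (x i t) (∑ j, if G.Adj i j then a i j • x j t else 0)
    convert hd using 1
    · rfl
    · rfl
    · rfl
    · rfl
    rw [map_sub, _root_.map_smul, hS, hcoef]
    rfl
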